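/- Let b ≥ 2 and k ≥ 1 be integers and let a = k·b. Then for every real m×n matrix A, herdisc(A, b) ≤ k · herdisc(A, a). -/

import Mathlib

open Finset

/-- `c`-color discrepancy of a matrix: minimum over `c`-colorings `p` of the columns of the
maximum over colors `d` and rows `i` of `|∑_{j : p j = d} A i j - (1/c) ∑_j A i j|`. -/
noncomputable def mdisc {ι κ : Type*} [Fintype ι] [Fintype κ] (A : ι → κ → ℝ) (c : ℕ) : ℝ :=
  ⨅ p : κ → Fin c, ⨆ d : Fin c, ⨆ i : ι,
    |∑ j ∈ Finset.univ.filter (fun j => p j = d), A i j - (1 / (c : ℝ)) * ∑ j, A i j|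

/-- hereditary `c`-color discrepancy: maximum of `mdisc` over all nonempty column submatrices. -/
noncomputable def mherdisc {ι : Type*} [Fintype ι] {n : ℕ} (A : ι → Fin n → ℝ) (c : ℕ) : ℝ :=
  ⨆ J : {J : Finset (Fin n) // J.Nonempty}, mdisc (fun i (j : {x // x ∈ J.1}) => A i j.1) c

lemma card_fiber (b k : ℕ) (hk : 0 < k) (d : Fin b) :
    (Finset.univ.filter (fun c : Fin (k * b) => c.val / k = d.val)).card = k := by
  have hlt : ∀ i : ℕ, d.val * k + i % k < k * b := by
    intro i
    have h1 : i % k < k := Nat.mod_lt _ hk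
    have h2 : d.val + 1 ≤ b := d.2
    calc d.val * k + i % k < (d.val + 1) * k := by nlinarith
      _ ≤ b * k := Nat.mul_le_mul_right k h2
      _ = k * b := Nat.mul_comm _ _
  have h := Finset.card_nbij'
    (s := Finset.univ.filter (fun c : Fin (k * b) => c.val / k = d.val))
    (t := Finset.range k)
    (fun c => c.val % k) (fun i => ⟨d.val * k + i % k, hlt i⟩)
    (fun c _ => Finset.mem_range.mpr (Nat.mod_lt _ hk))
    (fun i _ => by
      simp only [Finset.mem_coe, Finset.mem_filter, Finset.mem_univ, true_and]
      show (d.val * k + i % k) / k = d.val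
      rw [Nat.mul_comm d.val k, Nat.mul_add_div hk, Nat.div_eq_of_lt (Nat.mod_lt _ hk),
        Nat.add_zero])
    (fun c hc => by
      simp only [Finset.mem_coe, Finset.mem_filter, Finset.mem_univ, true_and] at hc
      apply Fin.ext
      show d.val * k + c.val % k % k = c.val
      rw [Nat.mod_mod_of_dvd _ (dvd_refl k), ← hc, Nat.mul_comm, Nat.div_add_mod])
    (fun i hi => by
      have h1 : i < k := Finset.mem_range.mp hi
      show (d.val * k + i % k) % k = i
      rw [Nat.mod_eq_of_lt h1, Nat.mul_comm d.val k, Nat.mul_add_mod, Nat.mod_eq_of_lt h1])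
  simpa using h

lemma mdisc_le_k_mul {ι κ : Type*} [Fintype ι] [Fintype κ] [Nonempty ι]
    (A : ι → κ → ℝ) (b k : ℕ) (hb : 2 ≤ b) (hk : 1 ≤ k) :
    mdisc A b ≤ (k : ℝ) * mdisc A (k * b) := by
  have hk0 : 0 < k := hk
  have hb0 : 0 < b := by omega
  have ha0 : 0 < k * b := Nat.mul_pos hk0 hb0
  haveI : NeZero b := ⟨by omega⟩
  haveI : NeZero (k * b) := ⟨by omega⟩
  set a := k * b with ha
  -- F p : value of an a-coloring
  set F : (κ → Fin a) → ℝ := fun p => ⨆ d : Fin a, ⨆ i : ι,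
    |∑ j ∈ Finset.univ.filter (fun j => p j = d), A i j - (1 / (a : ℝ)) * ∑ j, A i j| with hF
  obtain ⟨p₀, hp₀⟩ := Finite.exists_min F
  have hinf : mdisc A a = F p₀ := by
    refine le_antisymm (ciInf_le (Set.Finite.bddBelow (Set.finite_range F)) p₀)
      (le_ciInf hp₀)
  rw [hinf]
  -- the induced b-coloring
  have hq : ∀ j, (p₀ j).val / k < b := by
    intro j
    rw [Nat.div_lt_iff_lt_mul hk0]
    have h2 := (p₀ j).2
    have h3 : b * k = k * b := Nat.mul_comm b k
    omega
  set q : κ → Fin b := fun j => ⟨(p₀ j).val / k, hq j⟩ with hqdef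
  have h1 : mdisc A b ≤ ⨆ d : Fin b, ⨆ i : ι,
      |∑ j ∈ Finset.univ.filter (fun j => q j = d), A i j - (1 / (b : ℝ)) * ∑ j, A i j| :=
    ciInf_le (Set.Finite.bddBelow (Set.finite_range _)) q
  refine h1.trans (ciSup_le fun d => ciSup_le fun i => ?_)
  -- key estimate for fixed d, i
  set T : ℝ := ∑ j, A i j with hT
  set Sd := Finset.univ.filter (fun c : Fin a => c.val / k = d.val) with hSd
  have hcard : Sd.card = k := card_fiber b k hk0 d
  have hmaps : ∀ j ∈ Finset.univ.filter (fun j => q j = d), p₀ j ∈ Sd := by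
    intro j hj
    simp only [Finset.mem_filter, Finset.mem_univ, true_and] at hj
    simp only [hSd, Finset.mem_filter, Finset.mem_univ, true_and]
    rw [← hj]
  have hsplit : ∑ j ∈ Finset.univ.filter (fun j => q j = d), A i j
      = ∑ c ∈ Sd, ∑ j ∈ Finset.univ.filter (fun j => p₀ j = c), A i j := by
    rw [← Finset.sum_fiberwise_of_maps_to hmaps (A i)]
    refine Finset.sum_congr rfl fun c hc => ?_
    simp only [hSd, Finset.mem_filter, Finset.mem_univ, true_and] at hc
    refine Finset.sum_congr ?_ fun _ _ => rfl
    rw [Finset.filter_filter]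
    refine Finset.filter_congr fun j _ => ?_
    constructor
    · rintro ⟨_, h2⟩; exact h2
    · intro h2
      refine ⟨?_, h2⟩
      apply Fin.ext
      show (p₀ j).val / k = d.val
      rw [h2, hc]
  have hconst : (1 / (b : ℝ)) * T = ∑ _c ∈ Sd, (1 / (a : ℝ)) * T := by
    rw [Finset.sum_const, hcard, nsmul_eq_mul]
    have hbne : (b : ℝ) ≠ 0 := Nat.cast_ne_zero.mpr (by omega)
    have hkne : (k : ℝ) ≠ 0 := Nat.cast_ne_zero.mpr (by omega)
    rw [ha]
    push_cast
    field_simp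
  have hFb : ∀ c : Fin a,
      |∑ j ∈ Finset.univ.filter (fun j => p₀ j = c), A i j - (1 / (a : ℝ)) * T| ≤ F p₀ := by
    intro c
    simp only [hF]
    apply le_ciSup_of_le (Set.Finite.bddAbove (Set.finite_range _)) c
    apply le_ciSup_of_le (Set.Finite.bddAbove (Set.finite_range _)) i
    exact le_refl _
  calc |∑ j ∈ Finset.univ.filter (fun j => q j = d), A i j - (1 / (b : ℝ)) * T|
      = |∑ c ∈ Sd, (∑ j ∈ Finset.univ.filter (fun j => p₀ j = c), A i j - (1 / (a : ℝ)) * T)| := by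
        rw [hsplit, hconst, Finset.sum_sub_distrib]
    _ ≤ ∑ c ∈ Sd, |∑ j ∈ Finset.univ.filter (fun j => p₀ j = c), A i j - (1 / (a : ℝ)) * T| :=
        Finset.abs_sum_le_sum_abs _ _
    _ ≤ ∑ _c ∈ Sd, F p₀ := Finset.sum_le_sum (fun c _ => hFb c)
    _ = (k : ℝ) * F p₀ := by rw [Finset.sum_const, hcard, nsmul_eq_mul]

/-- Let b ≥ 2 and k ≥ 1 be integers and a = k·b. Then for every real m×n matrix A,
herdisc(A, b) ≤ k · herdisc(A, a). -/
theorem herdisc_le_k_mul_herdisc_of_dvd {m n : ℕ} (hm : 0 < m) (hn : 0 < n)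
    (A : Fin m → Fin n → ℝ) (b k a : ℕ) (hb : 2 ≤ b) (hk : 1 ≤ k) (ha : a = k * b) :
    mherdisc A b ≤ (k : ℝ) * mherdisc A a := by
  haveI : Nonempty (Fin m) := ⟨⟨0, hm⟩⟩
  haveI : Nonempty {J : Finset (Fin n) // J.Nonempty} :=
    ⟨⟨{⟨0, hn⟩}, Finset.singleton_nonempty _⟩⟩
  rw [mherdisc]
  refine ciSup_le fun J => ?_
  have h1 : mdisc (fun i (j : {x // x ∈ J.1}) => A i j.1) b
      ≤ (k : ℝ) * mdisc (fun i (j : {x // x ∈ J.1}) => A i j.1) (k * b) :=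
    mdisc_le_k_mul _ b k hb hk
  rw [← ha] at h1
  refine h1.trans ?_
  have h2 : mdisc (fun i (j : {x // x ∈ J.1}) => A i j.1) a ≤ mherdisc A a := by
    unfold mherdisc
    apply le_ciSup (Set.Finite.bddAbove (Set.finite_range _)) J
  have hk0 : (0:ℝ) ≤ k := Nat.cast_nonneg k
  exact mul_le_mul_of_nonneg_left h2 hk0
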